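/- Let J ⊆ ℝ be an interval containing 0, σ: J → ℝ a continuously differentiable function, c₀ ∈ ℝ, and X₁: J → ℝ a twice continuously differentiable function satisfying X₁'' + (1 + σ²) X₁ − σ X₂ = 0 on J, where X₂(x) := ∫₀ˣ σ'(t) X₁(t) dt + c₀. Then the function G := (σ X₁ − X₂)² + X₁² + (X₁')² is constant on J. (Constancy of G in Example 1 of Section 3.) -/

import Mathlib

noncomputable section

open Real

/-- Constancy of `G` in Example 1 of Section 3. -/
theorem stmt_7 (J : Set ℝ) (hJopen : IsOpen J) (hJint : J.OrdConnected) (h0 : (0 : ℝ) ∈ J)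
    (σ : ℝ → ℝ) (hσ : ContDiffOn ℝ 1 σ J)
    (c₀ : ℝ)
    (X₁ : ℝ → ℝ) (hX₁ : ContDiffOn ℝ 2 X₁ J)
    (X₂ : ℝ → ℝ) (hX₂ : ∀ x ∈ J, X₂ x = (∫ t in (0 : ℝ)..x, deriv σ t * X₁ t) + c₀)
    (hODE : ∀ x ∈ J, deriv (deriv X₁) x + (1 + σ x ^ 2) * X₁ x - σ x * X₂ x = 0)
    (G : ℝ → ℝ)
    (hG : G = fun x => (σ x * X₁ x - X₂ x) ^ 2 + X₁ x ^ 2 + deriv X₁ x ^ 2) :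
    ∀ x ∈ J, ∀ x' ∈ J, G x = G x' := by
  set f : ℝ → ℝ := fun t => deriv σ t * X₁ t with hf
  have hfcont : ContinuousOn f J :=
    (hσ.continuousOn_deriv_of_isOpen hJopen le_rfl).mul hX₁.continuousOn
  have hX₁' : ContDiffOn ℝ 1 (deriv X₁) J := hX₁.deriv_of_isOpen hJopen (by norm_num)
  -- main step: G has derivative 0 at every point of J
  have key : ∀ x ∈ J, HasDerivAt G 0 x := by
    intro x hx
    have hσd : HasDerivAt σ (deriv σ x) x :=
      ((hσ.differentiableOn one_ne_zero).differentiableAt (hJopen.mem_nhds hx)).hasDerivAt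
    have hX₁d : HasDerivAt X₁ (deriv X₁ x) x :=
      ((hX₁.differentiableOn (by norm_num)).differentiableAt (hJopen.mem_nhds hx)).hasDerivAt
    have hX₁dd : HasDerivAt (deriv X₁) (deriv (deriv X₁) x) x :=
      ((hX₁'.differentiableOn one_ne_zero).differentiableAt (hJopen.mem_nhds hx)).hasDerivAt
    -- derivative of X₂
    have hsub : Set.uIcc (0:ℝ) x ⊆ J := hJint.uIcc_subset h0 hx
    have hint : IntervalIntegrable f MeasureTheory.volume 0 x :=
      (hfcont.mono hsub).intervalIntegrable
    have hmeas : StronglyMeasurableAtFilter f (nhds x) :=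
      ⟨J, hJopen.mem_nhds hx, (hfcont.aestronglyMeasurable hJopen.measurableSet)⟩
    have hcx : ContinuousAt f x := hfcont.continuousAt (hJopen.mem_nhds hx)
    have hF : HasDerivAt (fun y => (∫ t in (0:ℝ)..y, f t) + c₀) (f x) x := by
      have := intervalIntegral.integral_hasDerivAt_right hint hmeas hcx
      simpa using this.add_const c₀
    have hX₂d : HasDerivAt X₂ (f x) x := by
      refine hF.congr_of_eventuallyEq ?_
      filter_upwards [hJopen.mem_nhds hx] with y hy
      rw [hX₂ y hy]
    -- assemble
    have hode := hODE x hx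
    have hval : deriv (deriv X₁) x = σ x * X₂ x - (1 + σ x ^ 2) * X₁ x := by linarith
    have hGd := ((((hσd.mul hX₁d).sub hX₂d).pow 2).add (hX₁d.pow 2)).add (hX₁dd.pow 2)
    rw [hG]
    convert hGd using 1
    · rfl
    · rfl
    · rfl
    rw [hval]; simp only [hf, Pi.sub_apply, Pi.mul_apply]; push_cast; ring
  -- conclude constancy
  have const : ∀ a ∈ J, ∀ b ∈ J, a ≤ b → G b = G a := by
    intro a ha b hb hab
    have hIcc : Set.Icc a b ⊆ J := hJint.out ha hb
    have hcont : ContinuousOn G (Set.Icc a b) := fun y hy =>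
      ((key y (hIcc hy)).continuousAt).continuousWithinAt
    have hderiv : ∀ y ∈ Set.Ico a b, HasDerivWithinAt G 0 (Set.Ici y) y := fun y hy =>
      (key y (hIcc ⟨hy.1, hy.2.le⟩)).hasDerivWithinAt
    exact constant_of_has_deriv_right_zero hcont hderiv b ⟨hab, le_rfl⟩
  intro x hx x' hx'
  rcases le_total x x' with h | h
  · exact (const x hx x' hx' h).symm
  · exact const x' hx' x hx h
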